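/- Over the two-letter alphabet X = {x < y}, for each integer d ≥ 2, the set N = {x, xy, xy², …, xy^{d−2}, y} of d Lyndon words is closed under taking Lyndon factors and contains X, and its associated antichain is W(N) = { xy^i · xy^{i+1} : 0 ≤ i ≤ d−3 } ∪ { xy^{d−1} }, which has exactly d − 1 elements. -/
import Mathlib
set_option linter.unusedSectionVars false
open List

/-- A Lyndon word: a nonempty word strictly lexicographically smaller than
all of its proper cyclic rotations. -/
def IsLyndon {X : Type*} [LinearOrder X] (w : List X) : Prop :=
  w ≠ [] ∧ ∀ a b : List X, a ≠ [] → b ≠ [] → w = a ++ b →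
    List.Lex (· < ·) w (b ++ a)

/-- `N` is a set of Lyndon words containing every letter of the alphabet and
closed under taking Lyndon factors ("Lyndon atoms"). -/
def IsLyndonSystem {X : Type*} [LinearOrder X] (N : Set (List X)) : Prop :=
  (∀ w ∈ N, IsLyndon w) ∧ (∀ x : X, [x] ∈ N) ∧
    (∀ w ∈ N, ∀ u : List X, IsLyndon u → u <:+: w → u ∈ N)

/-- The antichain `W(N)` of Lyndon words associated to `N`: Lyndon words not
in `N` all of whose proper Lyndon factors lie in `N`. -/
def WSet {X : Type*} [LinearOrder X] (N : Set (List X)) : Set (List X) :=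
  {w | IsLyndon w ∧ w ∉ N ∧ ∀ u : List X, IsLyndon u → u <:+: w → u ≠ w → u ∈ N}

lemma lex_irrefl' {X : Type*} [LinearOrder X] : ∀ l : List X, ¬ List.Lex (· < ·) l l := by
  intro l h
  induction l with
  | nil => cases h
  | cons a t ih => cases h with
    | rel h => exact lt_irrefl _ h
    | cons h => exact ih h

lemma lex_append_left' {X : Type*} [LinearOrder X] (p : List X) {u v : List X}
    (h : List.Lex (· < ·) u v) : List.Lex (· < ·) (p ++ u) (p ++ v) := by
  induction p with
  | nil => exact h
  | cons a t ih => exact List.Lex.cons ih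

lemma lex_strip' {X : Type*} [LinearOrder X] (p : List X) {u v : List X}
    (h : List.Lex (· < ·) (p ++ u) (p ++ v)) : List.Lex (· < ·) u v := by
  induction p with
  | nil => exact h
  | cons a t ih => cases h with
    | rel h => exact absurd h (lt_irrefl _)
    | cons h => exact ih h

lemma not_lex_yx {X : Type*} [LinearOrder X] {x y : X} (hxy : x < y) (u v : List X) :
    ¬ List.Lex (· < ·) (y :: u) (x :: v) := by
  intro h
  cases h with
  | rel h => exact absurd (h.trans hxy) (lt_irrefl _)
  | cons h => exact absurd rfl (ne_of_gt hxy)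

section Two
variable {X : Type*} [LinearOrder X] {x y : X}

/-- singleton words are Lyndon -/
lemma lyndon_singleton (z : X) : IsLyndon [z] := by
  refine ⟨by simp, fun a b ha hb hab => ?_⟩
  exfalso
  have : a.length + b.length = 1 := by
    have := congrArg List.length hab; simpa using this.symm
  rcases a with _ | ⟨c, a⟩ <;> rcases b with _ | ⟨c', b⟩ <;> simp_all

/-- x followed by y's is Lyndon -/
lemma lyndon_xy (hxy : x < y) (i : ℕ) : IsLyndon (x :: List.replicate i y) := by
  refine ⟨by simp, fun a b ha hb hab => ?_⟩
  rcases a with _ | ⟨c, a⟩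
  · exact absurd rfl ha
  rcases b with _ | ⟨c', b⟩
  · exact absurd rfl hb
  have hc : c = x := by
    have := congrArg (·.head?) hab; simpa using this.symm
  have hc' : c' = y := by
    have hmem : c' ∈ List.replicate i y := by
      have : a ++ c' :: b = List.replicate i y := by
        simpa [hc] using hab.symm
      rw [← this]; simp
    exact List.eq_of_mem_replicate hmem
  subst hc hc'
  exact List.Lex.rel hxy

/-- replicate of y's Lyndon only if length 1 -/
lemma lyndon_replicate (h : IsLyndon (List.replicate k y : List X)) : k = 1 := by
  rcases k with _ | _ | k
  · exact absurd rfl h.1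
  · rfl
  · exfalso
    have := h.2 [y] (List.replicate (k+1) y) (by simp) (by simp)
      (by simp [List.replicate_succ])
    rw [← List.replicate_succ'] at this
    exact lex_irrefl' _ this

/-- a Lyndon word starting with y (over {x,y}) is [y] -/
lemma lyndon_head_y (hxy : x < y) (hX : ∀ z : X, z = x ∨ z = y)
    {t : List X} (h : IsLyndon (y :: t)) : t = [] := by
  by_contra ht
  by_cases hx : x ∈ t
  · obtain ⟨s, u, rfl⟩ := List.append_of_mem hx
    have := h.2 (y :: s) (x :: u) (by simp) (by simp) (by simp)
    exact not_lex_yx hxy _ _ this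
  · have hall : ∀ c ∈ t, c = y := by
      intro c hc
      rcases hX c with rfl | rfl
      · exact absurd hc hx
      · rfl
    have : t = List.replicate t.length y := List.eq_replicate_length.2 hall
    have h2 : (y :: t) = List.replicate (t.length + 1) y := by
      rw [List.replicate_succ]; exact congrArg (y :: ·) this
    rw [h2] at h
    have := lyndon_replicate h
    simp at this
    exact ht (by simp [this])
end Two

section Two
variable {X : Type*} [LinearOrder X] {x y : X}

lemma suffix_cons_cases {t : List X} {c : X} {l : List X} (h : t <:+ (c :: l)) :
    t = c :: l ∨ t <:+ l := by
  obtain ⟨s, hs⟩ := h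
  rcases s with _ | ⟨c', s⟩
  · left; simpa using hs
  · right; exact ⟨s, (by simpa using hs : _ ∧ _).2⟩

lemma suffix_replicate {t : List X} {m : ℕ} (h : t <:+ List.replicate m y) :
    ∃ j, j ≤ m ∧ t = List.replicate j y := by
  refine ⟨t.length, ?_, ?_⟩
  · simpa using h.length_le
  · exact List.eq_replicate_length.2 fun b hb => List.eq_of_mem_replicate (h.subset hb)

lemma prefix_replicate {t : List X} {m : ℕ} (h : t <+: List.replicate m y) :
    ∃ j, j ≤ m ∧ t = List.replicate j y := by
  refine ⟨t.length, ?_, ?_⟩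
  · simpa using h.length_le
  · exact List.eq_replicate_length.2 fun b hb => List.eq_of_mem_replicate (h.subset hb)

lemma suffix_replicate_append : ∀ {j : ℕ} {l t : List X}, t <:+ (List.replicate j y ++ l) →
    t <:+ l ∨ ∃ j', 1 ≤ j' ∧ j' ≤ j ∧ t = List.replicate j' y ++ l := by
  intro j
  induction j with
  | zero => intro l t h; left; simpa using h
  | succ n ih =>
    intro l t h
    rw [List.replicate_succ, List.cons_append] at h
    rcases suffix_cons_cases h with rfl | h
    · right; exact ⟨n + 1, by omega, le_refl _, by rw [List.replicate_succ, List.cons_append]⟩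
    · rcases ih h with h | ⟨j', h1, h2, h3⟩
      · left; exact h
      · right; exact ⟨j', h1, by omega, h3⟩

lemma prefix_cons_cases {u : List X} {c : X} {l : List X} (h : u <+: (c :: l)) :
    u = [] ∨ ∃ u', u = c :: u' ∧ u' <+: l := by
  rcases u with _ | ⟨c', u⟩
  · left; rfl
  · right
    obtain ⟨s, hs⟩ := h
    rw [List.cons_append] at hs
    injection hs with h1 h2
    exact ⟨u, by rw [h1], ⟨s, h2⟩⟩

lemma prefix_replicate_append : ∀ {j : ℕ} {l u : List X}, u <+: (List.replicate j y ++ l) →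
    (∃ l', l' ≤ j ∧ u = List.replicate l' y) ∨
    (∃ v, v <+: l ∧ u = List.replicate j y ++ v) := by
  intro j
  induction j with
  | zero => intro l u h; right; exact ⟨u, by simpa using h, by simp⟩
  | succ n ih =>
    intro l u h
    rw [List.replicate_succ, List.cons_append] at h
    rcases prefix_cons_cases h with rfl | ⟨u', rfl, hu'⟩
    · left; exact ⟨0, by omega, rfl⟩
    · rcases ih hu' with ⟨l', h1, rfl⟩ | ⟨v, h1, rfl⟩
      · left; exact ⟨l' + 1, by omega, by rw [List.replicate_succ]⟩
      · right; exact ⟨v, h1, by rw [List.replicate_succ, List.cons_append]⟩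

/-- decomposition of a word over {x,y} by its leading run of y's -/
lemma lead_run (hX : ∀ z : X, z = x ∨ z = y) :
    ∀ s : List X, ∃ k r, s = List.replicate k y ++ r ∧ (r = [] ∨ ∃ t, r = x :: t) := by
  intro s
  induction s with
  | nil => exact ⟨0, [], by simp, Or.inl rfl⟩
  | cons c s ih =>
    rcases hX c with rfl | rfl
    · exact ⟨0, c :: s, by simp, Or.inr ⟨s, rfl⟩⟩
    · obtain ⟨k, r, rfl, hr⟩ := ih
      exact ⟨k + 1, r, by rw [List.replicate_succ, List.cons_append], hr⟩
end Two
section Pair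
variable {X : Type*} [LinearOrder X] {x y : X}

lemma lyndon_pair (hxy : x < y) {a b : ℕ} (hab : a < b) :
    IsLyndon ((x :: List.replicate a y) ++ (x :: List.replicate b y)) := by
  refine ⟨by simp, fun u v hu hv huv => ?_⟩
  obtain ⟨c, rfl⟩ : ∃ c, b = a + (c + 1) := ⟨b - a - 1, by omega⟩
  have hvs : v <:+ ((x :: List.replicate a y) ++ (x :: List.replicate (a + (c+1)) y)) :=
    ⟨u, huv.symm⟩
  rw [List.cons_append] at hvs
  rcases suffix_cons_cases hvs with hv1 | hvs
  · -- v is the whole word: impossible since u ≠ []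
    exfalso
    have h1 := congrArg List.length huv
    have h2 := congrArg List.length hv1
    simp at h1 h2
    rcases u with _ | _
    · exact hu rfl
    · simp at h1; omega
  · rcases suffix_replicate_append hvs with hvs | ⟨j', hj1, hj2, rfl⟩
    · rcases suffix_cons_cases hvs with rfl | hvs
      · -- v = x :: y^b, so u = x :: y^a
        have hu' : u = x :: List.replicate a y := by
          have := huv
          rw [List.append_cancel_right_eq] at this
          exact this.symm
        subst hu'
        have hrep : List.replicate (a + (c+1)) y
            = List.replicate a y ++ y :: List.replicate c y := by
          rw [List.replicate_add, List.replicate_succ]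
        have e1 : (x :: List.replicate a y) ++ (x :: List.replicate (a + (c+1)) y)
            = (x :: List.replicate a y) ++ (x :: List.replicate (a + (c+1)) y) := rfl
        have e2 : (x :: List.replicate (a + (c+1)) y) ++ (x :: List.replicate a y)
            = (x :: List.replicate a y) ++ ((y :: List.replicate c y) ++ (x :: List.replicate a y)) := by
          rw [hrep]; simp [List.cons_append, List.append_assoc]
        rw [e2]
        exact lex_append_left' _ (List.Lex.rel hxy)
      · -- v = y^j, j ≥ 1
        obtain ⟨j, hj, rfl⟩ := suffix_replicate hvs
        rcases j with _ | j
        · exact absurd rfl hv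
        · rw [List.replicate_succ, List.cons_append, List.cons_append]
          exact List.Lex.rel hxy
    · -- v = y^j' ++ x :: y^b, j' ≥ 1
      obtain ⟨j, rfl⟩ : ∃ j, j' = j + 1 := ⟨j' - 1, by omega⟩
      rw [List.replicate_succ]
      exact List.Lex.rel hxy

end Pair
section Pair2
variable {X : Type*} [LinearOrder X] {x y : X}

lemma not_lyndon_pair_le (hxy : x < y) {a b : ℕ} (hba : b ≤ a) :
    ¬ IsLyndon ((x :: List.replicate a y) ++ (x :: List.replicate b y)) := by
  intro h
  have hlex := h.2 (x :: List.replicate a y) (x :: List.replicate b y)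
    (by simp) (by simp) rfl
  obtain ⟨c, rfl⟩ : ∃ c, a = b + c := ⟨a - b, by omega⟩
  rcases Nat.eq_zero_or_pos c with rfl | hc
  · simp only [Nat.add_zero] at hlex
    exact lex_irrefl' _ hlex
  · obtain ⟨c', rfl⟩ : ∃ c', c = c' + 1 := ⟨c - 1, by omega⟩
    have e1 : (x :: List.replicate (b + (c'+1)) y) ++ (x :: List.replicate b y)
        = (x :: List.replicate b y) ++ ((y :: List.replicate c' y) ++ (x :: List.replicate b y)) := by
      rw [List.replicate_add, List.replicate_succ]
      simp [List.cons_append, List.append_assoc]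
    have e2 : (x :: List.replicate b y) ++ (x :: List.replicate (b + (c'+1)) y)
        = (x :: List.replicate b y) ++ (x :: List.replicate (b + (c'+1)) y) := rfl
    rw [e1] at hlex
    have := lex_strip' (x :: List.replicate b y) hlex
    exact not_lex_yx hxy _ _ this

end Pair2
section K
variable {X : Type*} [LinearOrder X] {x y : X}

lemma frep_succ (m : ℕ) (blk : List X) :
    (List.replicate (m+1) blk).flatten = blk ++ (List.replicate m blk).flatten := by
  rw [List.replicate_succ, List.flatten_cons]

lemma frep_succ' (m : ℕ) (blk : List X) :
    (List.replicate (m+1) blk).flatten = (List.replicate m blk).flatten ++ blk := by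
  rw [List.replicate_succ', List.flatten_append]
  simp

lemma frep_comm (m : ℕ) (blk : List X) :
    (List.replicate m blk).flatten ++ blk = blk ++ (List.replicate m blk).flatten := by
  rw [← frep_succ', ← frep_succ]

lemma frep_comm_append (m : ℕ) (blk l : List X) :
    (List.replicate m blk).flatten ++ (blk ++ l) = blk ++ ((List.replicate m blk).flatten ++ l) := by
  rw [← List.append_assoc, frep_comm, List.append_assoc]

theorem K_aux (hxy : x < y) (hX : ∀ z : X, z = x ∨ z = y) (a : ℕ) (s : List X) (j : ℕ)
    (w : List X) (hw : IsLyndon w)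
    (heq : w = (List.replicate (j+1) (x :: List.replicate a y)).flatten ++ x :: s) :
    ∃ b, a < b ∧ ((x :: List.replicate a y) ++ (x :: List.replicate b y)) <:+: w := by
  set blk : List X := x :: List.replicate a y with hblk
  have hJ : (List.replicate (j+1) blk).flatten = blk ++ (List.replicate j blk).flatten :=
    frep_succ j blk
  have hJne : (List.replicate (j+1) blk).flatten ≠ [] := by
    rw [hJ, hblk]; simp
  obtain ⟨k, r, hs, hr⟩ := lead_run hX s
  rcases hr with rfl | ⟨t, rfl⟩
  · -- s = y^k
    rw [List.append_nil] at hs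
    subst hs
    rcases lt_trichotomy k a with hk | rfl | hk
    · -- k < a : contradiction
      exfalso
      obtain ⟨c, rfl⟩ : ∃ c, a = k + (c + 1) := ⟨a - k - 1, by omega⟩
      have hrot := hw.2 _ _ hJne (List.cons_ne_nil x _) heq
      have e1 : w = (x :: List.replicate k y) ++
          (y :: (List.replicate c y ++ ((List.replicate j blk).flatten ++ x :: List.replicate k y))) := by
        rw [heq, hJ, hblk]
        simp [List.replicate_add, List.replicate_succ, List.append_assoc]
      have e2 : (x :: List.replicate k y) ++ (List.replicate (j+1) blk).flatten
          = (x :: List.replicate k y) ++ (x :: (List.replicate (k + (c+1)) y ++ (List.replicate j blk).flatten)) := by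
        rw [hJ, hblk]
        simp
      rw [e1, e2] at hrot
      exact not_lex_yx hxy _ _ (lex_strip' _ hrot)
    · -- k = a : w = flatten (replicate (j+2) blk) ; rotation is w itself
      exfalso
      have hw2 : w = blk ++ (List.replicate (j+1) blk).flatten := by
        rw [heq, ← hblk]
        exact frep_comm (j+1) blk
      have hrot := hw.2 blk ((List.replicate (j+1) blk).flatten)
        (by rw [hblk]; simp) hJne hw2
      have hback : (List.replicate (j+1) blk).flatten ++ blk = w := by
        rw [hw2, hJ, List.append_assoc, frep_comm]
      rw [hback] at hrot
      exact lex_irrefl' _ hrot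
    · -- k > a : found
      refine ⟨k, hk, (List.replicate j blk).flatten, [], ?_⟩
      rw [List.append_nil, heq, hJ, List.append_assoc]
      exact frep_comm_append j blk (x :: List.replicate k y)
  · -- s = y^k ++ x :: t
    rcases lt_trichotomy k a with hk | rfl | hk
    · -- k < a : contradiction
      exfalso
      obtain ⟨c, rfl⟩ : ∃ c, a = k + (c + 1) := ⟨a - k - 1, by omega⟩
      have hrot := hw.2 _ _ hJne (List.cons_ne_nil x s) heq
      have e1 : w = (x :: List.replicate k y) ++
          (y :: (List.replicate c y ++ ((List.replicate j blk).flatten ++ x :: s))) := by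
        rw [heq, hJ, hblk]
        simp [List.replicate_add, List.replicate_succ, List.append_assoc]
      have e2 : (x :: s) ++ (List.replicate (j+1) blk).flatten
          = (x :: List.replicate k y) ++ (x :: (t ++ (List.replicate (j+1) blk).flatten)) := by
        rw [hs]
        simp
      rw [e1, e2] at hrot
      exact not_lex_yx hxy _ _ (lex_strip' _ hrot)
    · -- k = a : recurse
      have heq' : w = (List.replicate (j+1+1) blk).flatten ++ x :: t := by
        rw [heq, hs, frep_succ' (j+1) blk, List.append_assoc, hblk]
        simp
      have hlen : t.length < s.length := by
        rw [hs]; simp; omega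
      exact K_aux hxy hX k t (j+1) w hw heq'
    · -- k > a : found
      refine ⟨k, hk, (List.replicate j blk).flatten, x :: t, ?_⟩
      rw [heq, hs, hJ]
      simp only [List.append_assoc, List.cons_append, frep_comm_append]
termination_by s.length
decreasing_by exact hlen

end K

section Helpers
variable {X : Type*} [LinearOrder X] {x y : X}

lemma two_x_infix (hxy : x < y) (hX : ∀ z : X, z = x ∨ z = y) {w : List X} (hw : IsLyndon w)
    {a : ℕ} {s : List X} (heq : w = (x :: List.replicate a y) ++ x :: s) :
    ∃ b, a < b ∧ ((x :: List.replicate a y) ++ (x :: List.replicate b y)) <:+: w :=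
  K_aux hxy hX a s 0 w hw (by rw [heq]; simp)

lemma lyndon_infix_xy {u : List X} {m : ℕ} (hu : IsLyndon u)
    (hinf : u <:+: (x :: List.replicate m y)) :
    u = [y] ∨ ∃ l, l ≤ m ∧ u = x :: List.replicate l y := by
  obtain ⟨t, hut, hts⟩ := List.infix_iff_prefix_suffix.1 hinf
  rcases suffix_cons_cases hts with rfl | hts
  · rcases prefix_cons_cases hut with rfl | ⟨u', rfl, hu'⟩
    · exact absurd rfl hu.1
    · obtain ⟨l, hl, rfl⟩ := prefix_replicate hu'
      exact Or.inr ⟨l, hl, rfl⟩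
  · obtain ⟨jj, hj, rfl⟩ := suffix_replicate hts
    obtain ⟨l, hl, rfl⟩ := prefix_replicate hut
    have hl1 := lyndon_replicate hu
    subst hl1
    exact Or.inl rfl

lemma lyndon_eq_y {rest : List X} (hxy : x < y) (hX : ∀ z : X, z = x ∨ z = y)
    (hu : IsLyndon (y :: rest)) : y :: rest = [y] := by
  have := lyndon_head_y hxy hX hu
  rw [this]

lemma lyndon_infix_pair (hxy : x < y) (hX : ∀ z : X, z = x ∨ z = y) {u : List X} {i : ℕ}
    (hu : IsLyndon u)
    (hinf : u <:+: ((x :: List.replicate i y) ++ (x :: List.replicate (i+1) y)))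
    (hne : u ≠ (x :: List.replicate i y) ++ (x :: List.replicate (i+1) y)) :
    u = [y] ∨ ∃ l, l ≤ i + 1 ∧ u = x :: List.replicate l y := by
  obtain ⟨t, hut, hts⟩ := List.infix_iff_prefix_suffix.1 hinf
  rw [List.cons_append] at hts
  rcases suffix_cons_cases hts with rfl | hts
  · -- t is the whole word, u a prefix of it
    rw [← List.cons_append] at hut
    rcases prefix_cons_cases hut with rfl | ⟨u', rfl, hu'⟩
    · exact absurd rfl hu.1
    · rcases prefix_replicate_append hu' with ⟨l', hl', rfl⟩ | ⟨v, hv, rfl⟩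
      · exact Or.inr ⟨l', by omega, rfl⟩
      · rcases prefix_cons_cases hv with rfl | ⟨v', rfl, hv'⟩
        · exact Or.inr ⟨i, by omega, by simp⟩
        · obtain ⟨l, hl, rfl⟩ := prefix_replicate hv'
          rcases Nat.lt_or_ge l (i+1) with hli | hli
          · exfalso
            have : x :: (List.replicate i y ++ x :: List.replicate l y)
                = (x :: List.replicate i y) ++ (x :: List.replicate l y) := by simp
            rw [this] at hu
            exact not_lyndon_pair_le hxy (by omega) hu
          · exfalso
            apply hne
            have : l = i + 1 := by omega
            subst this
            simp
  · rcases suffix_replicate_append hts with hts | ⟨j', hj1, hj2, rfl⟩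
    · -- t <:+ x :: y^(i+1)
      exact lyndon_infix_xy hu (List.infix_iff_prefix_suffix.2 ⟨t, hut, hts⟩)
    · -- t = y^j' ++ x :: y^(i+1), j' ≥ 1
      rcases prefix_replicate_append hut with ⟨l', hl', rfl⟩ | ⟨v, hv, rfl⟩
      · have hl1 := lyndon_replicate hu
        subst hl1
        exact Or.inl rfl
      · left
        obtain ⟨j, rfl⟩ : ∃ j, j' = j + 1 := ⟨j' - 1, by omega⟩
        rw [List.replicate_succ, List.cons_append] at hu ⊢
        exact lyndon_eq_y hxy hX hu

lemma pair_ne_xy (hxy : x < y) {a b i : ℕ} :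
    (x :: List.replicate a y) ++ (x :: List.replicate b y) ≠ x :: List.replicate i y := by
  intro h
  rw [List.cons_append] at h
  injection h with h1 h2
  have : x ∈ List.replicate i y := by rw [← h2]; simp
  exact absurd (List.eq_of_mem_replicate this) (ne_of_lt hxy)

lemma pair_ne_y {a b : ℕ} :
    (x :: List.replicate a y) ++ (x :: List.replicate b y) ≠ ([y] : List X) := by
  intro h
  have := congrArg List.length h
  simp at this

lemma xy_ne_y {i : ℕ} (hxy : x < y) : x :: List.replicate i y ≠ ([y] : List X) := by
  intro h
  injection h with h1 h2
  exact absurd h1 (ne_of_lt hxy)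

lemma xy_inj {a b : ℕ} (h : x :: List.replicate a y = x :: List.replicate b y) : a = b := by
  have := congrArg List.length h
  simpa using this

end Helpers

theorem stmt14 {X : Type*} [LinearOrder X] (x y : X) (hxy : x < y)
    (hX : ∀ z : X, z = x ∨ z = y) (d : ℕ) (hd : 2 ≤ d) (N : Set (List X))
    (hN : N = {w : List X | ∃ i : ℕ, i + 2 ≤ d ∧ w = x :: List.replicate i y} ∪ {[y]}) :
    IsLyndonSystem N ∧ N.ncard = d ∧
    WSet N = {w : List X | ∃ i : ℕ, i + 3 ≤ d ∧
        w = (x :: List.replicate i y) ++ (x :: List.replicate (i + 1) y)} ∪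
      {x :: List.replicate (d - 1) y} ∧
    (WSet N).ncard = d - 1 := by
  have hmem : ∀ v : List X, v ∈ N ↔
      ((∃ i : ℕ, i + 2 ≤ d ∧ v = x :: List.replicate i y) ∨ v = [y]) := by
    intro v; rw [hN]; simp only [Set.mem_union, Set.mem_setOf_eq, Set.mem_singleton_iff]
  -- ===== Part 1 : IsLyndonSystem =====
  have part1 : IsLyndonSystem N := by
    refine ⟨?_, ?_, ?_⟩
    · intro w hw
      rcases (hmem w).1 hw with ⟨i, hi, rfl⟩ | rfl
      · exact lyndon_xy hxy i
      · exact lyndon_singleton y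
    · intro z
      rcases hX z with rfl | rfl
      · exact (hmem _).2 (Or.inl ⟨0, by omega, by simp⟩)
      · exact (hmem _).2 (Or.inr rfl)
    · intro w hw u hu hinf
      rcases (hmem w).1 hw with ⟨i, hi, rfl⟩ | rfl
      · rcases lyndon_infix_xy hu hinf with rfl | ⟨l, hl, rfl⟩
        · exact (hmem _).2 (Or.inr rfl)
        · exact (hmem _).2 (Or.inl ⟨l, by omega, rfl⟩)
      · -- w = [y]
        have hlen : u.length ≤ 1 := by
          have := hinf.sublist.length_le; simpa using this
        have hall : ∀ c ∈ u, c = y := by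
          intro c hc
          have := hinf.sublist.subset hc
          simpa using this
        have hrep : u = List.replicate u.length y := List.eq_replicate_length.2 hall
        have hpos : u.length ≠ 0 := by
          intro h0
          exact hu.1 (List.length_eq_zero_iff.1 h0)
        have h1 : u.length = 1 := by omega
        rw [h1] at hrep
        exact (hmem _).2 (Or.inr (by simpa using hrep))
  -- ===== Part 2 : ncard N = d =====
  have part2 : N.ncard = d := by
    have e1 : {w : List X | ∃ i : ℕ, i + 2 ≤ d ∧ w = x :: List.replicate i y}
        = (fun i : ℕ => x :: List.replicate i y) '' ↑(Finset.Iic (d - 2)) := by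
      ext w
      simp only [Set.mem_setOf_eq, Set.mem_image, Finset.coe_Iic, Set.mem_Iic]
      constructor
      · rintro ⟨i, hi, rfl⟩; exact ⟨i, by omega, rfl⟩
      · rintro ⟨i, hi, rfl⟩; exact ⟨i, by omega, rfl⟩
    have hinj : Function.Injective (fun i : ℕ => x :: List.replicate i y) := by
      intro a b h; exact xy_inj h
    have hyni : [y] ∉ {w : List X | ∃ i : ℕ, i + 2 ≤ d ∧ w = x :: List.replicate i y} := by
      rintro ⟨i, hi, hEq⟩
      exact xy_ne_y hxy hEq.symm
    have hfin : ({w : List X | ∃ i : ℕ, i + 2 ≤ d ∧ w = x :: List.replicate i y}).Finite := by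
      rw [e1]; exact (Finset.finite_toSet _).image _
    rw [hN, Set.ncard_union_eq (Set.disjoint_singleton_right.2 hyni) hfin
      (Set.finite_singleton _), e1, Set.ncard_image_of_injective _ hinj,
      Set.ncard_coe_finset, Nat.card_Iic, Set.ncard_singleton]
    omega
  -- ===== Part 3 : WSet description =====
  have part3 : WSet N = {w : List X | ∃ i : ℕ, i + 3 ≤ d ∧
      w = (x :: List.replicate i y) ++ (x :: List.replicate (i + 1) y)} ∪
      {x :: List.replicate (d - 1) y} := by
    ext w
    simp only [Set.mem_union, Set.mem_setOf_eq, Set.mem_singleton_iff]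
    constructor
    · rintro ⟨hLw, hwN, hmin⟩
      rcases w with _ | ⟨c, t⟩
      · exact absurd rfl hLw.1
      rcases hX c with hc | hc <;> subst c
      swap
      · -- head y : w = [y] ∈ N, contradiction
        exfalso
        have := lyndon_eq_y hxy hX hLw
        rw [this] at hwN
        exact hwN ((hmem _).2 (Or.inr rfl))
      -- head x
      obtain ⟨k, r, hs, hr⟩ := lead_run hX t
      subst hs
      rcases hr with rfl | ⟨s, rfl⟩
      · -- w = x :: y^k
        rw [List.append_nil] at hLw hwN hmin ⊢
        have hk2 : ¬ (k + 2 ≤ d) := by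
          intro h
          exact hwN ((hmem _).2 (Or.inl ⟨k, h, rfl⟩))
        by_cases hkd : k = d - 1
        · right; rw [hkd]
        · exfalso
          obtain ⟨c, rfl⟩ : ∃ c, k = (d - 1) + (c + 1) := ⟨k - d, by omega⟩
          have hpre : (x :: List.replicate (d - 1) y) <+:
              x :: List.replicate ((d - 1) + (c + 1)) y :=
            ⟨List.replicate (c + 1) y, by rw [List.cons_append, ← List.replicate_add]⟩
          have hne : x :: List.replicate (d - 1) y ≠ x :: List.replicate ((d - 1) + (c + 1)) y := by
            intro h; have := xy_inj h; omega
          have hmem' := hmin _ (lyndon_xy hxy _) hpre.isInfix hne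
          rcases (hmem _).1 hmem' with ⟨i, hi, hEq⟩ | hEq
          · have := xy_inj hEq; omega
          · exact xy_ne_y hxy hEq
      · -- w = x :: (y^k ++ x :: s)
        have hw2 : x :: (List.replicate k y ++ x :: s)
            = (x :: List.replicate k y) ++ (x :: s) := by simp
        obtain ⟨b, hkb, hinf⟩ := two_x_infix hxy hX hLw hw2
        have hupair : IsLyndon ((x :: List.replicate k y) ++ (x :: List.replicate b y)) :=
          lyndon_pair hxy hkb
        have huN : ((x :: List.replicate k y) ++ (x :: List.replicate b y)) ∉ N := by
          intro h
          rcases (hmem _).1 h with ⟨i, hi, hEq⟩ | hEq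
          · exact pair_ne_xy hxy hEq
          · exact pair_ne_y hEq
        have huw : (x :: List.replicate k y) ++ (x :: List.replicate b y)
            = x :: (List.replicate k y ++ x :: s) := by
          by_contra hne
          exact huN (hmin _ hupair hinf hne)
        have hbN : (x :: List.replicate b y) ∈ N := by
          apply hmin _ (lyndon_xy hxy b)
          · exact (List.suffix_append (x :: List.replicate k y) _).isInfix.trans
              (by rw [huw])
          · intro h
            rw [← huw] at h
            have := congrArg List.length h
            simp at this
            omega
        have hb2 : b + 2 ≤ d := by
          rcases (hmem _).1 hbN with ⟨i, hi, hEq⟩ | hEq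
          · have := xy_inj hEq; omega
          · exact absurd hEq (xy_ne_y hxy)
        by_cases hbk : b = k + 1
        · left
          exact ⟨k, by omega, by rw [← huw, hbk]⟩
        · exfalso
          obtain ⟨c, rfl⟩ : ∃ c, b = (k + 1) + (c + 1) := ⟨b - k - 2, by omega⟩
          have hpre : ((x :: List.replicate k y) ++ (x :: List.replicate (k + 1) y)) <+:
              x :: (List.replicate k y ++ x :: s) := by
            refine ⟨List.replicate (c + 1) y, ?_⟩
            rw [← huw]
            simp [List.replicate_add, List.append_assoc]
          have hneq : ((x :: List.replicate k y) ++ (x :: List.replicate (k + 1) y))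
              ≠ x :: (List.replicate k y ++ x :: s) := by
            intro h
            rw [← huw] at h
            have := congrArg List.length h
            simp at this
          have := hmin _ (lyndon_pair hxy (by omega)) hpre.isInfix hneq
          rcases (hmem _).1 this with ⟨i, hi, hEq⟩ | hEq
          · exact pair_ne_xy hxy hEq
          · exact pair_ne_y hEq
    · rintro (⟨i, hi, rfl⟩ | rfl)
      · refine ⟨lyndon_pair hxy (by omega), ?_, ?_⟩
        · intro h
          rcases (hmem _).1 h with ⟨j, hj, hEq⟩ | hEq
          · exact pair_ne_xy hxy hEq
          · exact pair_ne_y hEq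
        · intro u hu hinf hne
          rcases lyndon_infix_pair hxy hX hu hinf hne with rfl | ⟨l, hl, rfl⟩
          · exact (hmem _).2 (Or.inr rfl)
          · exact (hmem _).2 (Or.inl ⟨l, by omega, rfl⟩)
      · refine ⟨lyndon_xy hxy _, ?_, ?_⟩
        · intro h
          rcases (hmem _).1 h with ⟨j, hj, hEq⟩ | hEq
          · have := xy_inj hEq; omega
          · exact xy_ne_y hxy hEq
        · intro u hu hinf hne
          rcases lyndon_infix_xy hu hinf with rfl | ⟨l, hl, rfl⟩
          · exact (hmem _).2 (Or.inr rfl)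
          · have hld : l ≠ d - 1 := by
              intro h; rw [h] at hne; exact hne rfl
            exact (hmem _).2 (Or.inl ⟨l, by omega, rfl⟩)
  -- ===== Part 4 : ncard WSet =====
  have part4 : (WSet N).ncard = d - 1 := by
    rw [part3]
    have e2 : {w : List X | ∃ i : ℕ, i + 3 ≤ d ∧
        w = (x :: List.replicate i y) ++ (x :: List.replicate (i + 1) y)}
        = (fun i : ℕ => (x :: List.replicate i y) ++ (x :: List.replicate (i + 1) y)) ''
          ↑(Finset.Iio (d - 2)) := by
      ext w
      simp only [Set.mem_setOf_eq, Set.mem_image, Finset.coe_Iio, Set.mem_Iio]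
      constructor
      · rintro ⟨i, hi, rfl⟩; exact ⟨i, by omega, rfl⟩
      · rintro ⟨i, hi, rfl⟩; exact ⟨i, by omega, rfl⟩
    have hinj : Function.Injective
        (fun i : ℕ => (x :: List.replicate i y) ++ (x :: List.replicate (i + 1) y)) := by
      intro a b h
      have := congrArg List.length h
      simp at this
      omega
    have hyni : x :: List.replicate (d - 1) y ∉ {w : List X | ∃ i : ℕ, i + 3 ≤ d ∧
        w = (x :: List.replicate i y) ++ (x :: List.replicate (i + 1) y)} := by
      rintro ⟨i, hi, hEq⟩
      exact pair_ne_xy hxy hEq.symm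
    have hfin : ({w : List X | ∃ i : ℕ, i + 3 ≤ d ∧
        w = (x :: List.replicate i y) ++ (x :: List.replicate (i + 1) y)}).Finite := by
      rw [e2]; exact (Finset.finite_toSet _).image _
    rw [Set.ncard_union_eq (Set.disjoint_singleton_right.2 hyni) hfin
      (Set.finite_singleton _), e2, Set.ncard_image_of_injective _ hinj,
      Set.ncard_coe_finset, Nat.card_Iio, Set.ncard_singleton]
    omega
  exact ⟨part1, part2, part3, part4⟩
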